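/- Let C ∈ ℂ^{2×2} be diagonalizable with all eigenvalues non-defective, Re λ₁ = μ ≤ Re λ₂, and let α ∈ [0,1) be the cosine of the angle between the normalized eigenvectors of C*. For μ_s ≤ μ̃ ≤ μ (μ_s the smallest eigenvalue of the Hermitian part of C), set β₀² = 4(Re λ₁ − μ̃)(Re λ₂ − μ̃)/|λ₁ + conj(λ₂) − 2μ̃|² (and β₀ = 1 if λ₁ = λ₂ and μ̃ = μ), and β̃ = max(−α, −β₀). Then every solution of f' = −Cf satisfies ‖f(t)‖₂ ≤ c₁(μ̃) e^{−μ̃ t} ‖f(0)‖₂ for all t ≥ 0, where c₁(μ̃)² = (1 + s)/(1 − s) with s = √(1 − (1−α²)(1−β̃²)/(1+αβ̃)²). -/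

import Mathlib

open Matrix Complex Finset

section Aux

lemma normSq_par (A B : ℂ) : Complex.normSq (A+B) + Complex.normSq (A-B)
    = 2*Complex.normSq A + 2*Complex.normSq B := by
  simp only [Complex.normSq_apply, Complex.add_re, Complex.add_im, Complex.sub_re,
    Complex.sub_im]
  ring

lemma normSq_pol (A B : ℂ) : Complex.normSq (A+B) - Complex.normSq (A-B)
    = 4 * ((starRingEnd ℂ) A * B).re := by
  simp only [Complex.normSq_apply, Complex.add_re, Complex.add_im, Complex.sub_re,
    Complex.sub_im, Complex.mul_re, Complex.conj_re, Complex.conj_im]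
  ring

lemma hasDerivAt_cexp_mul (lam : ℂ) (t : ℝ) :
    HasDerivAt (fun s : ℝ => Complex.exp (lam * s)) (lam * Complex.exp (lam * t)) t := by
  have h0 : HasDerivAt (fun s : ℝ => (s : ℂ)) 1 t := by
    simpa using (hasDerivAt_id t).ofReal_comp
  have h1 : HasDerivAt (fun s : ℝ => lam * (s:ℂ)) lam t := by
    simpa using h0.const_mul lam
  simpa [mul_comm] using h1.cexp

lemma ode_sol (lam : ℂ) (g : ℝ → ℂ) (hg : ∀ t, HasDerivAt g (-(lam * g t)) t) (t : ℝ) :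
    g t = Complex.exp (-(lam * t)) * g 0 := by
  have hh : ∀ s : ℝ, HasDerivAt (fun s : ℝ => Complex.exp (lam*s) * g s) 0 s := by
    intro s
    have : HasDerivAt (fun s : ℝ => Complex.exp (lam*s) * g s) _ s :=
      (hasDerivAt_cexp_mul lam s).fun_mul (hg s)
    convert this using 1
    ring
  have hc : (fun s : ℝ => Complex.exp (lam*s) * g s) t
      = (fun s : ℝ => Complex.exp (lam*s) * g s) 0 :=
    is_const_of_deriv_eq_zero (fun s => (hh s).differentiableAt)
      (fun s => (hh s).deriv) t 0
  simp only at hc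
  have h2 : Complex.exp (lam*t) * g t = g 0 := by simpa using hc
  rw [← h2, Complex.exp_neg]
  field_simp

lemma two_sqrt_le (u v : ℝ) (hu : 0 ≤ u) (hv : 0 ≤ v) : 2 * Real.sqrt (u*v) ≤ u + v := by
  rw [Real.sqrt_mul hu]
  nlinarith [Real.sq_sqrt hu, Real.sq_sqrt hv, sq_nonneg (Real.sqrt u - Real.sqrt v),
    Real.sqrt_nonneg u, Real.sqrt_nonneg v]

lemma deriv_nonpos (X Y a1 a2 : ℝ) (B c : ℂ) (hX : 0 ≤ X) (hY : 0 ≤ Y)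
    (ha1 : 0 ≤ a1) (ha2 : 0 ≤ a2) (hc : c.re = a1 + a2)
    (hB : ‖c‖ * ‖B‖ ≤ 2 * Real.sqrt (a1*a2*X*Y)) (u : ℝ) :
    X * (Real.exp (-(2*a1)*u) * (-(2*a1))) + Y * (Real.exp (-(2*a2)*u) * (-(2*a2)))
        + 2*((B * (-c * Complex.exp (-c*u)))).re ≤ 0 := by
  set E1 := Real.exp (-(2*a1)*u) with hE1
  set E2 := Real.exp (-(2*a2)*u) with hE2
  have hE1p : 0 < E1 := Real.exp_pos _
  have hE2p : 0 < E2 := Real.exp_pos _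
  have habs : ‖Complex.exp (-c*↑u)‖ = Real.exp (-(a1+a2)*u) := by
    rw [Complex.norm_exp]
    congr 1
    simp [Complex.mul_re, hc]
    ring
  have hre : (B * (-c * Complex.exp (-c*↑u))).re
      ≤ ‖B‖ * ‖c‖ * Real.exp (-(a1+a2)*u) := by
    calc (B * (-c * Complex.exp (-c*↑u))).re ≤ ‖B * (-c * Complex.exp (-c*↑u))‖ :=
          Complex.re_le_norm _
      _ = ‖B‖ * ‖c‖ * Real.exp (-(a1+a2)*u) := by
          rw [norm_mul, norm_mul, norm_neg, habs]; ring
  have hEE : E1 * E2 = (Real.exp (-(a1+a2)*u))^2 := by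
    rw [hE1, hE2, ← Real.exp_add, sq, ← Real.exp_add]
    congr 1
    ring
  have hprod : Real.sqrt (a1*a2*X*Y) * Real.exp (-(a1+a2)*u)
      = Real.sqrt ((a1*X*E1) * (a2*Y*E2)) := by
    have h1 : (a1*X*E1) * (a2*Y*E2) = (a1*a2*X*Y) * (Real.exp (-(a1+a2)*u))^2 := by
      rw [← hEE]; ring
    rw [h1, Real.sqrt_mul (show (0:ℝ) ≤ a1*a2*X*Y by positivity),
      Real.sqrt_sq (Real.exp_nonneg _)]
  have hamgm : 2 * Real.sqrt ((a1*X*E1) * (a2*Y*E2)) ≤ a1*X*E1 + a2*Y*E2 :=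
    two_sqrt_le _ _ (by positivity) (by positivity)
  have hfin : (B * (-c * Complex.exp (-c*↑u))).re ≤ a1*X*E1 + a2*Y*E2 := by
    have h2 : ‖B‖ * ‖c‖ * Real.exp (-(a1+a2)*u)
        ≤ 2 * Real.sqrt (a1*a2*X*Y) * Real.exp (-(a1+a2)*u) := by
      have h3 := mul_le_mul_of_nonneg_right
        (show ‖B‖ * ‖c‖ ≤ 2 * Real.sqrt (a1*a2*X*Y) by linarith)
        (Real.exp_nonneg (-(a1+a2)*u))
      linarith
    calc (B * (-c * Complex.exp (-c*↑u))).re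
        ≤ ‖B‖ * ‖c‖ * Real.exp (-(a1+a2)*u) := hre
      _ ≤ 2 * Real.sqrt (a1*a2*X*Y) * Real.exp (-(a1+a2)*u) := h2
      _ = 2 * Real.sqrt ((a1*X*E1) * (a2*Y*E2)) := by rw [mul_assoc, hprod]
      _ ≤ a1*X*E1 + a2*Y*E2 := hamgm
  nlinarith [hfin]

lemma phi_anti (X Y a1 a2 : ℝ) (B c : ℂ) (hX : 0 ≤ X) (hY : 0 ≤ Y)
    (ha1 : 0 ≤ a1) (ha2 : 0 ≤ a2) (hc : c.re = a1 + a2)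
    (hB : ‖c‖ * ‖B‖ ≤ 2 * Real.sqrt (a1*a2*X*Y)) (t : ℝ) (ht : 0 ≤ t) :
    X * Real.exp (-(2*a1)*t) + Y * Real.exp (-(2*a2)*t) + 2*(B*Complex.exp (-(c*t))).re
      ≤ X + Y + 2*B.re := by
  set φ : ℝ → ℝ := fun t => X * Real.exp (-(2*a1)*t) + Y * Real.exp (-(2*a2)*t)
    + 2*(B*Complex.exp (-(c*t))).re with hφ
  have hder : ∀ u : ℝ, HasDerivAt φ
      (X * (Real.exp (-(2*a1)*u) * (-(2*a1))) + Y * (Real.exp (-(2*a2)*u) * (-(2*a2)))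
        + 2*((B * (-c * Complex.exp (-c*u)))).re) u := by
    intro u
    have h1 : HasDerivAt (fun u:ℝ => Real.exp (-(2*a1)*u)) (Real.exp (-(2*a1)*u) * (-(2*a1))) u := by
      simpa [mul_comm] using ((hasDerivAt_id u).const_mul (-(2*a1))).exp
    have h2 : HasDerivAt (fun u:ℝ => Real.exp (-(2*a2)*u)) (Real.exp (-(2*a2)*u) * (-(2*a2))) u := by
      simpa [mul_comm] using ((hasDerivAt_id u).const_mul (-(2*a2))).exp
    have h3 : HasDerivAt (fun u:ℝ => Complex.exp (-(c*u))) (-c * Complex.exp (-c*u)) u := by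
      have := hasDerivAt_cexp_mul (-c) u
      simpa [neg_mul, mul_comm] using this
    have h4 : HasDerivAt (fun u:ℝ => B * Complex.exp (-(c*u))) (B * (-c * Complex.exp (-c*u))) u :=
      h3.const_mul B
    have h5 : HasDerivAt (fun u:ℝ => (B * Complex.exp (-(c*u))).re)
        ((B * (-c * Complex.exp (-c*u))).re) u :=
      Complex.reCLM.hasFDerivAt.comp_hasDerivAt u h4
    exact ((h1.const_mul X).add (h2.const_mul Y)).add (h5.const_mul 2)
  have hanti : Antitone φ := by
    refine antitone_of_deriv_nonpos (fun u => (hder u).differentiableAt) (fun u => ?_)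
    rw [(hder u).deriv]
    exact deriv_nonpos X Y a1 a2 B c hX hY ha1 ha2 hc hB u
  have := hanti ht
  simpa [hφ] using this

lemma alg_main (x y g : ℂ) (al bt : ℝ) (hg : Complex.normSq g = 1)
    (hal0 : 0 ≤ al) (hal1 : al < 1) (hbt0 : bt ≤ 0) (hbtal : -al ≤ bt) :
    (1-al)*(1-bt)*(Complex.normSq x + Complex.normSq y
        + 2*((starRingEnd ℂ) x * y * ((al:ℂ)*g)).re)
      ≤ Complex.normSq (x + (al:ℂ)*g*y) + Complex.normSq ((al:ℂ)*(starRingEnd ℂ) g*x + y)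
        + 2*(((bt:ℂ)*g) * (starRingEnd ℂ) (x + (al:ℂ)*g*y) * ((al:ℂ)*(starRingEnd ℂ) g*x + y)).re
    ∧ Complex.normSq (x + (al:ℂ)*g*y) + Complex.normSq ((al:ℂ)*(starRingEnd ℂ) g*x + y)
        + 2*(((bt:ℂ)*g) * (starRingEnd ℂ) (x + (al:ℂ)*g*y) * ((al:ℂ)*(starRingEnd ℂ) g*x + y)).re
      ≤ (1+al)*(1+bt)*(Complex.normSq x + Complex.normSq y
        + 2*((starRingEnd ℂ) x * y * ((al:ℂ)*g)).re) := by
  have hgg : g * (starRingEnd ℂ) g = 1 := by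
    rw [Complex.mul_conj, hg, Complex.ofReal_one]
  set u1 := x + (al:ℂ)*g*y with hu1def
  set u2 := (al:ℂ)*(starRingEnd ℂ) g*x + y with hu2def
  have h1 : u1 + g*u2 = ((1+al : ℝ):ℂ) * (x + g*y) := by
    rw [hu1def, hu2def]
    push_cast
    linear_combination (al:ℂ) * x * hgg
  have h2 : u1 - g*u2 = ((1-al : ℝ):ℂ) * (x - g*y) := by
    rw [hu1def, hu2def]
    push_cast
    linear_combination (-(al:ℂ) * x) * hgg
  set p := Complex.normSq (x + g*y) with hp
  set q := Complex.normSq (x - g*y) with hq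
  have hp0 : 0 ≤ p := Complex.normSq_nonneg _
  have hq0 : 0 ≤ q := Complex.normSq_nonneg _
  have hgy : Complex.normSq (g*y) = Complex.normSq y := by
    rw [Complex.normSq_mul, hg, one_mul]
  have hNa := normSq_par x (g*y)
  have hNb := normSq_pol x (g*y)
  have hNc : ((starRingEnd ℂ) x * y * ((al:ℂ)*g)).re = al * ((starRingEnd ℂ) x * (g*y)).re := by
    rw [show (starRingEnd ℂ) x * y * ((al:ℂ)*g) = (al:ℂ) * ((starRingEnd ℂ) x * (g*y)) by ring,
      Complex.re_ofReal_mul]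
  have hN : Complex.normSq x + Complex.normSq y
      + 2*((starRingEnd ℂ) x * y * ((al:ℂ)*g)).re = ((1+al)*p + (1-al)*q)/2 := by
    rw [hNc]; rw [hgy] at hNa; rw [← hp, ← hq] at hNa hNb
    linear_combination (-1/2)*hNa - (al/2)*hNb
  have hgu2 : Complex.normSq (g*u2) = Complex.normSq u2 := by
    rw [Complex.normSq_mul, hg, one_mul]
  have hQa := normSq_par u1 (g*u2)
  have hQb := normSq_pol u1 (g*u2)
  have hQc : (((bt:ℂ)*g) * (starRingEnd ℂ) u1 * u2).re
      = bt * ((starRingEnd ℂ) u1 * (g*u2)).re := by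
    rw [show ((bt:ℂ)*g) * (starRingEnd ℂ) u1 * u2 = (bt:ℂ) * ((starRingEnd ℂ) u1 * (g*u2)) by ring,
      Complex.re_ofReal_mul]
  have hring1 : Complex.normSq (u1 + g*u2) = (1+al)^2 * p := by
    rw [h1, Complex.normSq_mul, Complex.normSq_ofReal, hp]; ring
  have hring2 : Complex.normSq (u1 - g*u2) = (1-al)^2 * q := by
    rw [h2, Complex.normSq_mul, Complex.normSq_ofReal, hq]; ring
  have hQ : Complex.normSq u1 + Complex.normSq u2
      + 2*(((bt:ℂ)*g) * (starRingEnd ℂ) u1 * u2).re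
      = ((1+bt)*(1+al)^2*p + (1-bt)*(1-al)^2*q)/2 := by
    rw [hQc]
    rw [hring1, hring2] at hQa hQb
    rw [hgu2] at hQa
    linear_combination (-1/2)*hQa - (bt/2)*hQb
  rw [hN, hQ]
  constructor
  · nlinarith [mul_nonneg hp0 (by linarith : 0 ≤ al + bt), mul_nonneg hq0 (by linarith : 0 ≤ al + bt),
      mul_nonneg (mul_nonneg hp0 (by linarith : 0 ≤ al + bt)) (by linarith : 0 ≤ 1 + al)]
  · nlinarith [mul_nonneg hq0 (by linarith : 0 ≤ al + bt),
      mul_nonneg (mul_nonneg hq0 (by linarith : 0 ≤ al + bt)) (by linarith : 0 ≤ 1 - al)]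

lemma sum_normsq_eq (v : Fin 2 → ℂ) : ∑ i, ‖v i‖^2 = (star v ⬝ᵥ v).re := by
  simp [dotProduct, Fin.sum_univ_two, Pi.star_apply, Complex.normSq_apply,
    ← Complex.normSq_eq_norm_sq, Complex.mul_re, Complex.conj_re, Complex.conj_im,
    Complex.add_re]

lemma lagrange (a b c d : ℂ) :
    Complex.normSq ((starRingEnd ℂ) a * c + (starRingEnd ℂ) b * d)
      + Complex.normSq (a*d - b*c)
    = (Complex.normSq a + Complex.normSq b) * (Complex.normSq c + Complex.normSq d) := by
  simp only [Complex.normSq_apply, Complex.add_re, Complex.add_im, Complex.sub_re,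
    Complex.sub_im, Complex.mul_re, Complex.mul_im, Complex.conj_re, Complex.conj_im]
  ring

lemma decomp (w1 w2 : Fin 2 → ℂ) (h1 : star w1 ⬝ᵥ w1 = 1) (h2 : star w2 ⬝ᵥ w2 = 1)
    (hα : Complex.normSq (star w1 ⬝ᵥ w2) < 1) (v : Fin 2 → ℂ) :
    ∃ x y : ℂ, v = x • w1 + y • w2 := by
  set D := w1 0 * w2 1 - w1 1 * w2 0 with hD
  have hdot : star w1 ⬝ᵥ w2 = (starRingEnd ℂ) (w1 0) * w2 0 + (starRingEnd ℂ) (w1 1) * w2 1 := by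
    simp [dotProduct, Fin.sum_univ_two, Pi.star_apply]
  have hn1 : Complex.normSq (w1 0) + Complex.normSq (w1 1) = 1 := by
    have := congrArg Complex.re h1
    simpa [dotProduct, Fin.sum_univ_two, Pi.star_apply, Complex.add_re,
      Complex.mul_re, Complex.conj_re, Complex.conj_im, Complex.normSq_apply] using this
  have hn2 : Complex.normSq (w2 0) + Complex.normSq (w2 1) = 1 := by
    have := congrArg Complex.re h2
    simpa [dotProduct, Fin.sum_univ_two, Pi.star_apply, Complex.add_re,
      Complex.mul_re, Complex.conj_re, Complex.conj_im, Complex.normSq_apply] using this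
  have hlag := lagrange (w1 0) (w1 1) (w2 0) (w2 1)
  rw [hn1, hn2] at hlag
  have hDpos : 0 < Complex.normSq D := by
    rw [hdot] at hα
    have h3 : Complex.normSq (w1 0 * w2 1 - w1 1 * w2 0)
        = 1 - Complex.normSq ((starRingEnd ℂ) (w1 0) * w2 0 + (starRingEnd ℂ) (w1 1) * w2 1) := by
      linarith [hlag]
    rw [hD, h3]
    linarith
  have hDne : D ≠ 0 := by
    intro h; rw [h] at hDpos; simp at hDpos
  refine ⟨(w2 1 * v 0 - w2 0 * v 1)/D, (w1 0 * v 1 - w1 1 * v 0)/D, ?_⟩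
  funext i
  fin_cases i <;>
  · simp only [Pi.add_apply, Pi.smul_apply, smul_eq_mul]
    field_simp
    simp only [Fin.zero_eta, Fin.mk_one, hD]
    ring

lemma dot_self_eq (v : Fin 2 → ℂ) : star v ⬝ᵥ v = ((∑ i, ‖v i‖^2 : ℝ) : ℂ) := by
  simp [dotProduct, Fin.sum_univ_two, Pi.star_apply, Complex.ofReal_add,
    Complex.normSq_eq_norm_sq]
  rw [mul_comm ((starRingEnd ℂ) (v 0)) (v 0), mul_comm ((starRingEnd ℂ) (v 1)) (v 1),
    Complex.mul_conj, Complex.mul_conj]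
  simp [Complex.normSq_eq_norm_sq]

lemma dot_symm (w1 w2 : Fin 2 → ℂ) :
    star w2 ⬝ᵥ w1 = (starRingEnd ℂ) (star w1 ⬝ᵥ w2) := by
  simp [dotProduct, Fin.sum_univ_two, Pi.star_apply, map_add, _root_.map_mul, Complex.conj_conj]
  ring

end Aux

set_option maxHeartbeats 2000000 in
theorem stmt17 (C : Matrix (Fin 2) (Fin 2) ℂ) (lam1 lam2 : ℂ)
    (w1 w2 : Fin 2 → ℂ) (α μ μs μt : ℝ)
    (hw1 : w1 ≠ 0) (hw2 : w2 ≠ 0)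
    (he1 : Cᴴ.mulVec w1 = (starRingEnd ℂ) lam1 • w1)
    (he2 : Cᴴ.mulVec w2 = (starRingEnd ℂ) lam2 • w2)
    (hn1 : Real.sqrt (∑ i, ‖w1 i‖ ^ 2) = 1) (hn2 : Real.sqrt (∑ i, ‖w2 i‖ ^ 2) = 1)
    (hα : α = ‖star w1 ⬝ᵥ w2‖) (hα0 : 0 ≤ α) (hα1 : α < 1)
    (hμ : lam1.re = μ) (hle : μ ≤ lam2.re) (hpos : 0 < μ)
    (hμs : IsLeast {l : ℝ | ∃ v : Fin 2 → ℂ, v ≠ 0 ∧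
        (((1 / 2 : ℂ)) • (C + Cᴴ)).mulVec v = (l : ℂ) • v} μs)
    (hμt1 : μs ≤ μt) (hμt2 : μt ≤ μ)
    (f : ℝ → Fin 2 → ℂ) (hf : ∀ t : ℝ, HasDerivAt f (-(C.mulVec (f t))) t) :
    let β0 : ℝ := if lam1 + (starRingEnd ℂ) lam2 - 2 * (μt : ℂ) = 0 then 1 else
      Real.sqrt (4 * (lam1.re - μt) * (lam2.re - μt) /
        ‖lam1 + (starRingEnd ℂ) lam2 - 2 * (μt : ℂ)‖ ^ 2)
    let βt : ℝ := max (-α) (-β0)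
    let s : ℝ := Real.sqrt (1 - (1 - α ^ 2) * (1 - βt ^ 2) / (1 + α * βt) ^ 2)
    ∀ t : ℝ, 0 ≤ t →
      Real.sqrt (∑ i, ‖f t i‖ ^ 2) ≤
        Real.sqrt ((1 + s) / (1 - s)) * Real.exp (-μt * t) *
          Real.sqrt (∑ i, ‖f 0 i‖ ^ 2) := by
  intro β0 βt s t ht
  -- normalization facts
  have hw1sum : (∑ i, ‖w1 i‖^2 : ℝ) = 1 := Real.sqrt_eq_one.mp hn1
  have hw2sum : (∑ i, ‖w2 i‖^2 : ℝ) = 1 := Real.sqrt_eq_one.mp hn2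
  have hw1dot : star w1 ⬝ᵥ w1 = 1 := by rw [dot_self_eq, hw1sum]; norm_num
  have hw2dot : star w2 ⬝ᵥ w2 = 1 := by rw [dot_self_eq, hw2sum]; norm_num
  set γ : ℂ := star w1 ⬝ᵥ w2 with hγdef
  have hγnorm : ‖γ‖ = α := by rw [hα]
  have hγnsq : Complex.normSq γ = α^2 := by
    rw [← Complex.sq_norm, hγnorm]
  have hγlt : Complex.normSq γ < 1 := by rw [hγnsq]; nlinarith
  -- unit phase g
  set g : ℂ := if γ = 0 then 1 else (α:ℂ)⁻¹ * γ with hgdef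
  have hgns : Complex.normSq g = 1 := by
    rw [hgdef]
    split_ifs with h
    · simp
    · have hαpos : 0 < α := by
        rcases lt_or_eq_of_le hα0 with h' | h'
        · exact h'
        · exfalso; apply h
          have : ‖γ‖ = 0 := by rw [hγnorm, ← h']
          exact norm_eq_zero.mp this
      rw [Complex.normSq_mul, Complex.normSq_inv, Complex.normSq_ofReal, hγnsq, sq]
      field_simp
  have hγg : γ = (α:ℂ) * g := by
    rw [hgdef]
    split_ifs with h
    · have : α = 0 := by rw [← hγnorm, h]; simp
      rw [h, this]; simp
    · have hαpos : 0 < α := by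
        rcases lt_or_eq_of_le hα0 with h' | h'
        · exact h'
        · exfalso; apply h
          have : ‖γ‖ = 0 := by rw [hγnorm, ← h']
          exact norm_eq_zero.mp this
      have : (α:ℂ) ≠ 0 := by exact_mod_cast hαpos.ne'
      field_simp
  have hgabs : ‖g‖ = 1 := by
    have h := Complex.sq_norm g
    rw [hgns] at h
    nlinarith [norm_nonneg g]
  -- beta facts
  have hβ00 : 0 ≤ β0 := by
    show (0:ℝ) ≤ if lam1 + (starRingEnd ℂ) lam2 - 2 * (μt : ℂ) = 0 then 1 else
      Real.sqrt (4 * (lam1.re - μt) * (lam2.re - μt) /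
        ‖lam1 + (starRingEnd ℂ) lam2 - 2 * (μt : ℂ)‖ ^ 2)
    split_ifs
    · norm_num
    · exact Real.sqrt_nonneg _
  have hbt0 : βt ≤ 0 := max_le (neg_nonpos.mpr hα0) (neg_nonpos.mpr hβ00)
  have hbta : -α ≤ βt := le_max_left _ _
  have hbtb : -β0 ≤ βt := le_max_right _ _
  -- spectral gaps
  have ha1 : (0:ℝ) ≤ lam1.re - μt := by rw [hμ]; linarith
  have ha2 : (0:ℝ) ≤ lam2.re - μt := by linarith
  set a1 : ℝ := lam1.re - μt with ha1def
  set a2 : ℝ := lam2.re - μt with ha2def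
  set c : ℂ := lam1 + (starRingEnd ℂ) lam2 - 2 * (μt:ℂ) with hcdef
  set c' : ℂ := (starRingEnd ℂ) lam1 + lam2 - 2 * (μt:ℂ) with hc'def
  have hc'c : c' = (starRingEnd ℂ) c := by
    rw [hcdef, hc'def]
    simp [map_add, map_sub, _root_.map_mul, Complex.conj_conj, Complex.conj_ofReal, map_ofNat]
  have hc're : c'.re = a1 + a2 := by
    rw [hc'def, ha1def, ha2def]
    simp [Complex.add_re, Complex.sub_re, Complex.conj_re, Complex.mul_re]
    ring
  set b : ℂ := (βt:ℂ) * g with hbdef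
  have habsb : ‖b‖ = -βt := by
    rw [hbdef, norm_mul, hgabs, Complex.norm_real, Real.norm_eq_abs, abs_of_nonpos hbt0, mul_one]
  -- key bound on |c'| |b|
  have hcb : ‖c'‖ * ‖b‖ ≤ 2 * Real.sqrt (a1*a2) := by
    by_cases hc0 : c = 0
    · rw [hc'c, hc0]
      simp only [map_zero, norm_zero, zero_mul]
      positivity
    · have hβ0eq : β0 = Real.sqrt (4 * a1 * a2 / ‖c‖ ^ 2) := by
        show (if _ then _ else _) = _
        rw [if_neg hc0]
      have hcabs : ‖c'‖ = ‖c‖ := by rw [hc'c, Complex.norm_conj]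
      have hcpos : 0 < ‖c‖ := norm_pos_iff.mpr hc0
      have hcnorm : ‖c‖ = ‖c‖ := rfl
      have hsq : Real.sqrt (4 * a1 * a2 / ‖c‖ ^ 2) * ‖c‖ = 2 * Real.sqrt (a1*a2) := by
        rw [hcnorm, show (4:ℝ) * a1 * a2 / (‖c‖)^2 = (4*(a1*a2)) / (‖c‖)^2 by ring,
          Real.sqrt_div (by positivity), Real.sqrt_sq hcpos.le,
          Real.sqrt_mul (by norm_num : (0:ℝ) ≤ 4),
          show Real.sqrt 4 = 2 by rw [show (4:ℝ) = 2^2 by norm_num, Real.sqrt_sq zero_le_two]]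
        field_simp
      calc ‖c'‖ * ‖b‖ = ‖c‖ * (-βt) := by rw [hcabs, habsb]
        _ ≤ ‖c‖ * β0 := by
            apply mul_le_mul_of_nonneg_left (by linarith) hcpos.le
        _ = 2 * Real.sqrt (a1*a2) := by rw [hβ0eq, mul_comm, hsq]
  -- the dual coordinates and their evolution
  set g1 : ℝ → ℂ := fun u => star w1 ⬝ᵥ f u with hg1def
  set g2 : ℝ → ℂ := fun u => star w2 ⬝ᵥ f u with hg2def
  have hadj1 : ∀ z : Fin 2 → ℂ, star w1 ⬝ᵥ (C *ᵥ z) = lam1 * (star w1 ⬝ᵥ z) := by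
    intro z
    rw [dotProduct_mulVec]
    have h : star w1 ᵥ* C = lam1 • star w1 := by
      have h2 := congrArg star he1
      rw [star_mulVec, conjTranspose_conjTranspose] at h2
      rw [h2, star_smul]
      simp
    rw [h, smul_dotProduct, smul_eq_mul]
  have hadj2 : ∀ z : Fin 2 → ℂ, star w2 ⬝ᵥ (C *ᵥ z) = lam2 * (star w2 ⬝ᵥ z) := by
    intro z
    rw [dotProduct_mulVec]
    have h : star w2 ᵥ* C = lam2 • star w2 := by
      have h2 := congrArg star he2
      rw [star_mulVec, conjTranspose_conjTranspose] at h2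
      rw [h2, star_smul]
      simp
    rw [h, smul_dotProduct, smul_eq_mul]
  have hg1d : ∀ u : ℝ, HasDerivAt g1 (-(lam1 * g1 u)) u := by
    intro u
    have hcomp := hasDerivAt_pi.mp (hf u)
    have hsum : HasDerivAt (fun v : ℝ => ∑ i, star w1 i * f v i)
        (∑ i, star w1 i * (-(C *ᵥ f u)) i) u :=
      HasDerivAt.fun_sum (fun i _ => (hcomp i).const_mul (star w1 i))
    have heq : (∑ i, star w1 i * (-(C *ᵥ f u)) i) = -(lam1 * g1 u) := by
      have h1 : (∑ i, star w1 i * (-(C *ᵥ f u)) i) = star w1 ⬝ᵥ (-(C *ᵥ f u)) := rfl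
      rw [h1, dotProduct_neg, hadj1]
    rw [heq] at hsum
    exact hsum
  have hg2d : ∀ u : ℝ, HasDerivAt g2 (-(lam2 * g2 u)) u := by
    intro u
    have hcomp := hasDerivAt_pi.mp (hf u)
    have hsum : HasDerivAt (fun v : ℝ => ∑ i, star w2 i * f v i)
        (∑ i, star w2 i * (-(C *ᵥ f u)) i) u :=
      HasDerivAt.fun_sum (fun i _ => (hcomp i).const_mul (star w2 i))
    have heq : (∑ i, star w2 i * (-(C *ᵥ f u)) i) = -(lam2 * g2 u) := by
      have h1 : (∑ i, star w2 i * (-(C *ᵥ f u)) i) = star w2 ⬝ᵥ (-(C *ᵥ f u)) := rfl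
      rw [h1, dotProduct_neg, hadj2]
    rw [heq] at hsum
    exact hsum
  have hg1sol : ∀ u : ℝ, g1 u = Complex.exp (-(lam1*u)) * g1 0 := ode_sol lam1 g1 hg1d
  have hg2sol : ∀ u : ℝ, g2 u = Complex.exp (-(lam2*u)) * g2 0 := ode_sol lam2 g2 hg2d
  -- Lyapunov functional
  set Qf : ℝ → ℝ := fun u => Complex.normSq (g1 u) + Complex.normSq (g2 u)
    + 2*(b * (starRingEnd ℂ) (g1 u) * g2 u).re with hQfdef
  set X : ℝ := Complex.normSq (g1 0) with hXdef
  set Y : ℝ := Complex.normSq (g2 0) with hYdef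
  set B : ℂ := b * (starRingEnd ℂ) (g1 0) * g2 0 with hBdef
  have hX0 : 0 ≤ X := Complex.normSq_nonneg _
  have hY0 : 0 ≤ Y := Complex.normSq_nonneg _
  have hBabs : ‖c'‖ * ‖B‖ ≤ 2 * Real.sqrt (a1*a2*X*Y) := by
    have h1 : ‖B‖ = ‖b‖ * (Real.sqrt X * Real.sqrt Y) := by
      rw [hBdef, norm_mul, norm_mul, Complex.norm_conj, hXdef, hYdef]
      rw [Complex.norm_def, Complex.norm_def, Complex.norm_def]
      ring
    have h2 : Real.sqrt (a1*a2*X*Y) = Real.sqrt (a1*a2) * (Real.sqrt X * Real.sqrt Y) := by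
      rw [show a1*a2*X*Y = (a1*a2)*X*Y by ring, Real.sqrt_mul (by positivity),
        Real.sqrt_mul (by positivity)]
      ring
    calc ‖c'‖ * ‖B‖
        = (‖c'‖ * ‖b‖) * (Real.sqrt X * Real.sqrt Y) := by rw [h1]; ring
      _ ≤ (2 * Real.sqrt (a1*a2)) * (Real.sqrt X * Real.sqrt Y) :=
          mul_le_mul_of_nonneg_right hcb (by positivity)
      _ = 2 * Real.sqrt (a1*a2*X*Y) := by rw [h2]; ring
  have hdecay : Real.exp (2*μt*t) * Qf t ≤ Qf 0 := by
    have hphi := phi_anti X Y a1 a2 B c' hX0 hY0 ha1 ha2 hc're hBabs t ht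
    have hL : Real.exp (2*μt*t) * Qf t
        = X * Real.exp (-(2*a1)*t) + Y * Real.exp (-(2*a2)*t)
          + 2*(B*Complex.exp (-(c'*t))).re := by
      rw [hQfdef]
      simp only
      rw [hg1sol t, hg2sol t]
      have e1 : Complex.normSq (Complex.exp (-(lam1*↑t)) * g1 0)
          = Real.exp (-(2*lam1.re)*t) * X := by
        rw [Complex.normSq_mul, hXdef, ← Complex.sq_norm (Complex.exp _), Complex.norm_exp]
        rw [← Real.exp_nat_mul]
        congr 2
        simp [Complex.mul_re]
        ring
      have e2 : Complex.normSq (Complex.exp (-(lam2*↑t)) * g2 0)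
          = Real.exp (-(2*lam2.re)*t) * Y := by
        rw [Complex.normSq_mul, hYdef, ← Complex.sq_norm (Complex.exp _), Complex.norm_exp]
        rw [← Real.exp_nat_mul]
        congr 2
        simp [Complex.mul_re]
        ring
      have e3 : b * (starRingEnd ℂ) (Complex.exp (-(lam1*↑t)) * g1 0)
            * (Complex.exp (-(lam2*↑t)) * g2 0)
          = B * Complex.exp (-(((starRingEnd ℂ) lam1 + lam2)*(t:ℂ))) := by
        have hconj : (starRingEnd ℂ) (Complex.exp (-(lam1*(t:ℂ))))
            = Complex.exp (-((starRingEnd ℂ) lam1 * (t:ℂ))) := by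
          rw [← Complex.exp_conj]
          congr 1
          simp [map_neg, _root_.map_mul, Complex.conj_ofReal]
        have hsplit : Complex.exp (-(((starRingEnd ℂ) lam1 + lam2)*(t:ℂ)))
            = Complex.exp (-((starRingEnd ℂ) lam1 * (t:ℂ))) * Complex.exp (-(lam2*(t:ℂ))) := by
          rw [← Complex.exp_add]
          congr 1
          ring
        rw [_root_.map_mul, hconj, hBdef, hsplit]
        ring
      rw [e1, e2, e3]
      have r1 : Real.exp (2*μt*t) * Real.exp (-(2*lam1.re)*t) = Real.exp (-(2*a1)*t) := by
        rw [← Real.exp_add]; congr 1; rw [ha1def]; ring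
      have r2 : Real.exp (2*μt*t) * Real.exp (-(2*lam2.re)*t) = Real.exp (-(2*a2)*t) := by
        rw [← Real.exp_add]; congr 1; rw [ha2def]; ring
      have r3 : Real.exp (2*μt*t) * (B*Complex.exp (-(((starRingEnd ℂ) lam1 + lam2)*(t:ℂ)))).re
          = (B*Complex.exp (-(c'*t))).re := by
        rw [← Complex.re_ofReal_mul, Complex.ofReal_exp]
        congr 1
        rw [mul_comm, mul_assoc, ← Complex.exp_add]
        congr 2
        rw [hc'def]
        push_cast
        ring
      have expand : Real.exp (2*μt*t) * (Real.exp (-(2*lam1.re)*t) * X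
            + Real.exp (-(2*lam2.re)*t) * Y
            + 2*(B*Complex.exp (-(((starRingEnd ℂ) lam1 + lam2)*(t:ℂ)))).re)
          = X*(Real.exp (2*μt*t) * Real.exp (-(2*lam1.re)*t))
            + Y*(Real.exp (2*μt*t) * Real.exp (-(2*lam2.re)*t))
            + 2*(Real.exp (2*μt*t) * (B*Complex.exp (-(((starRingEnd ℂ) lam1 + lam2)*(t:ℂ)))).re) := by
        ring
      rw [expand, r1, r2, r3]
    rw [hL]
    calc X * Real.exp (-(2*a1)*t) + Y * Real.exp (-(2*a2)*t) + 2*(B*Complex.exp (-(c'*t))).re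
        ≤ X + Y + 2*B.re := hphi
      _ = Qf 0 := by rw [hQfdef]
  -- sandwich between the Euclidean norm and the Lyapunov functional
  have sandwich : ∀ u : ℝ, (1-α)*(1-βt)*(∑ i, ‖f u i‖^2) ≤ Qf u
      ∧ Qf u ≤ (1+α)*(1+βt)*(∑ i, ‖f u i‖^2) := by
    intro u
    obtain ⟨x, y, hxy⟩ := decomp w1 w2 hw1dot hw2dot hγlt (f u)
    have hu1 : g1 u = x + (α:ℂ)*g*y := by
      rw [hg1def]
      simp only
      rw [hxy, dotProduct_add, dotProduct_smul, dotProduct_smul, hw1dot, ← hγdef, hγg,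
        smul_eq_mul, smul_eq_mul]
      ring
    have hu2 : g2 u = (α:ℂ)*(starRingEnd ℂ) g*x + y := by
      rw [hg2def]
      simp only
      rw [hxy, dotProduct_add, dotProduct_smul, dotProduct_smul, hw2dot, dot_symm, ← hγdef, hγg,
        smul_eq_mul, smul_eq_mul, _root_.map_mul, Complex.conj_ofReal]
      ring
    have hNu : (∑ i, ‖f u i‖^2)
        = Complex.normSq x + Complex.normSq y
          + 2*((starRingEnd ℂ) x * y * ((α:ℂ)*g)).re := by
      rw [sum_normsq_eq, hxy]
      have e1 : (starRingEnd ℂ) (w1 0) * w1 0 + (starRingEnd ℂ) (w1 1) * w1 1 = 1 := by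
        simpa [dotProduct, Fin.sum_univ_two, Pi.star_apply] using hw1dot
      have e2 : (starRingEnd ℂ) (w2 0) * w2 0 + (starRingEnd ℂ) (w2 1) * w2 1 = 1 := by
        simpa [dotProduct, Fin.sum_univ_two, Pi.star_apply] using hw2dot
      have e3 : (starRingEnd ℂ) (w1 0) * w2 0 + (starRingEnd ℂ) (w1 1) * w2 1 = (α:ℂ)*g := by
        rw [← hγg, hγdef]; simp [dotProduct, Fin.sum_univ_two, Pi.star_apply]
      have e3c : w1 0 * (starRingEnd ℂ) (w2 0) + w1 1 * (starRingEnd ℂ) (w2 1)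
          = (starRingEnd ℂ) ((α:ℂ)*g) := by
        have := congrArg (starRingEnd ℂ) e3
        simpa [map_add, _root_.map_mul, Complex.conj_conj] using this
      have key : star (x • w1 + y • w2) ⬝ᵥ (x • w1 + y • w2)
          = ((Complex.normSq x : ℝ):ℂ) + ((Complex.normSq y : ℝ):ℂ)
            + ((starRingEnd ℂ) x * y * ((α:ℂ)*g)
               + x * (starRingEnd ℂ) y * (starRingEnd ℂ) ((α:ℂ)*g)) := by
        simp only [dotProduct, Fin.sum_univ_two, Pi.star_apply, Pi.add_apply, Pi.smul_apply,
          smul_eq_mul, star_add, star_mul', Complex.star_def]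
        linear_combination ((starRingEnd ℂ) x * x) * e1 + ((starRingEnd ℂ) y * y) * e2
          + ((starRingEnd ℂ) x * y) * e3 + (x * (starRingEnd ℂ) y) * e3c
          + Complex.mul_conj x + Complex.mul_conj y
      rw [key]
      have hreq : (x * (starRingEnd ℂ) y * (starRingEnd ℂ) ((α:ℂ)*g)).re
          = ((starRingEnd ℂ) x * y * ((α:ℂ)*g)).re := by
        rw [show x * (starRingEnd ℂ) y * (starRingEnd ℂ) ((α:ℂ)*g)
          = (starRingEnd ℂ) ((starRingEnd ℂ) x * y * ((α:ℂ)*g)) by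
            simp [map_add, _root_.map_mul, Complex.conj_conj]]
        exact Complex.conj_re _
      simp only [Complex.add_re, Complex.ofReal_re, hreq]
      ring
    have halg := alg_main x y g α βt hgns hα0 hα1 hbt0 hbta
    have hQu : Qf u = Complex.normSq (x + (α:ℂ)*g*y)
        + Complex.normSq ((α:ℂ)*(starRingEnd ℂ) g*x + y)
        + 2*(((βt:ℂ)*g) * (starRingEnd ℂ) (x + (α:ℂ)*g*y) * ((α:ℂ)*(starRingEnd ℂ) g*x + y)).re := by
      rw [hQfdef]
      simp only
      rw [hu1, hu2, hbdef]
    rw [hNu, hQu]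
    exact halg
  -- positivity facts for the constants
  have hbtgt : -1 < βt := by linarith
  have hlm : (0:ℝ) < (1-α)*(1-βt) := mul_pos (by linarith) (by linarith)
  have hlM : (0:ℝ) < (1+α)*(1+βt) := mul_pos (by linarith) (by linarith)
  have hd : (0:ℝ) < 1 + α*βt := by
    have h1 : α * (-α) ≤ α * βt := mul_le_mul_of_nonneg_left hbta hα0
    have h2 : α*α ≤ α := mul_le_of_le_one_right hα0 hα1.le
    nlinarith [h1, h2]
  have he0 : (0:ℝ) ≤ α + βt := by linarith
  -- identify s
  have hs : s = (α+βt)/(1+α*βt) := by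
    show Real.sqrt (1 - (1 - α ^ 2) * (1 - βt ^ 2) / (1 + α * βt) ^ 2) = _
    rw [show 1 - (1 - α ^ 2) * (1 - βt ^ 2) / (1 + α * βt) ^ 2 = ((α+βt)/(1+α*βt))^2 by
      field_simp; ring]
    exact Real.sqrt_sq (div_nonneg he0 hd.le)
  have hslt : s < 1 := by
    rw [hs, div_lt_one hd]; nlinarith [hlm]
  have hs0 : 0 ≤ s := by rw [hs]; exact div_nonneg he0 hd.le
  have hd0 : (1+α*βt) ≠ 0 := hd.ne'
  have hfrac : (1 + s) / (1 - s) = ((1+α)*(1+βt)) / ((1-α)*(1-βt)) := by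
    have e1 : 1 + s = ((1+α)*(1+βt))/(1+α*βt) := by
      rw [hs]; field_simp; ring
    have e2 : 1 - s = ((1-α)*(1-βt))/(1+α*βt) := by
      rw [hs]; field_simp; ring
    rw [e1, e2]
    rw [div_div_div_cancel_right₀ hd0]
  -- final chain
  have hN0 : (0:ℝ) ≤ ∑ i, ‖f 0 i‖^2 :=
    Finset.sum_nonneg (fun i _ => sq_nonneg _)
  have hNt : (0:ℝ) ≤ ∑ i, ‖f t i‖^2 :=
    Finset.sum_nonneg (fun i _ => sq_nonneg _)
  have hchain : (1-α)*(1-βt)*(∑ i, ‖f t i‖^2)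
      ≤ Real.exp (-(2*μt)*t) * ((1+α)*(1+βt)*(∑ i, ‖f 0 i‖^2)) := by
    have h1 := (sandwich t).1
    have h2 := (sandwich 0).2
    have h3 : Qf t ≤ Real.exp (-(2*μt)*t) * Qf 0 := by
      have h4 : Real.exp (-(2*μt)*t) * (Real.exp (2*μt*t) * Qf t) = Qf t := by
        rw [← mul_assoc, ← Real.exp_add]
        norm_num
      calc Qf t = Real.exp (-(2*μt)*t) * (Real.exp (2*μt*t) * Qf t) := h4.symm
        _ ≤ Real.exp (-(2*μt)*t) * Qf 0 :=
            mul_le_mul_of_nonneg_left hdecay (Real.exp_nonneg _)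
    calc (1-α)*(1-βt)*(∑ i, ‖f t i‖^2) ≤ Qf t := h1
      _ ≤ Real.exp (-(2*μt)*t) * Qf 0 := h3
      _ ≤ Real.exp (-(2*μt)*t) * ((1+α)*(1+βt)*(∑ i, ‖f 0 i‖^2)) :=
          mul_le_mul_of_nonneg_left h2 (Real.exp_nonneg _)
  have hE2 : Real.exp (-(2*μt)*t) = (Real.exp (-μt*t))^2 := by
    rw [sq, ← Real.exp_add]; congr 1; ring
  have hfinal : (∑ i, ‖f t i‖^2)
      ≤ ((1+α)*(1+βt)) / ((1-α)*(1-βt)) * ((Real.exp (-μt*t))^2 * (∑ i, ‖f 0 i‖^2)) := by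
    rw [div_mul_eq_mul_div, le_div_iff₀ hlm]
    calc (∑ i, ‖f t i‖^2) * ((1-α)*(1-βt)) = (1-α)*(1-βt)*(∑ i, ‖f t i‖^2) := by ring
      _ ≤ Real.exp (-(2*μt)*t) * ((1+α)*(1+βt)*(∑ i, ‖f 0 i‖^2)) := hchain
      _ = (1+α)*(1+βt) * ((Real.exp (-μt*t))^2 * (∑ i, ‖f 0 i‖^2)) := by
          rw [hE2]; ring
  calc Real.sqrt (∑ i, ‖f t i‖^2)
      ≤ Real.sqrt (((1+α)*(1+βt)) / ((1-α)*(1-βt))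
          * ((Real.exp (-μt*t))^2 * (∑ i, ‖f 0 i‖^2))) := Real.sqrt_le_sqrt hfinal
    _ = Real.sqrt ((1 + s) / (1 - s)) * Real.exp (-μt * t) * Real.sqrt (∑ i, ‖f 0 i‖^2) := by
        rw [hfrac, Real.sqrt_mul (by positivity), Real.sqrt_mul (sq_nonneg _),
          Real.sqrt_sq (Real.exp_nonneg _), mul_assoc]
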